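/- For every k ≥ 4 the Hanoi Towers group H(k) is not contracting: for every N there exists g ∈ H(k) with word length |g| ≥ N (with respect to the generating set of all a_{(ij)}) and some letter x ∈ {0,…,k−1} such that the section g_x has word length |g_x| ≥ |g|. -/
import Mathlib


/-- The generator `a_{(ij)}` of the Hanoi Towers group, acting on finite words:
`a_{(ij)}(iw) = jw`, `a_{(ij)}(jw) = iw`, `a_{(ij)}(xw) = x · a_{(ij)}(w)` for `x ∉ {i,j}`,
and `a_{(ij)}(ε) = ε`. -/
def hMove {k : ℕ} (i j : Fin k) : List (Fin k) → List (Fin k)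
  | [] => []
  | x :: w => if x = i then j :: w else if x = j then i :: w else x :: hMove i j w

theorem hMove_involutive {k : ℕ} (i j : Fin k) : ∀ l, hMove i j (hMove i j l) = l := by
  intro l
  induction l with
  | nil => rfl
  | cons x w ih =>
    by_cases hxi : x = i
    · by_cases hij : j = i <;> simp [hMove, hxi, hij]
    · by_cases hxj : x = j
      · by_cases hij : j = i <;> simp [hMove, hxi, hxj, hij]
      · simp [hMove, hxi, hxj, ih]

/-- The generator `a_{(ij)}` as a permutation of the set of finite words. -/
def hGen {k : ℕ} (i j : Fin k) : Equiv.Perm (List (Fin k)) :=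
  ⟨hMove i j, hMove i j, hMove_involutive i j, hMove_involutive i j⟩

/-- The Hanoi Towers group `H(k)`, the subgroup of the permutation group of the set of
finite words over `{0, …, k-1}` generated by the `a_{(ij)}` for `i < j`. -/
def HanoiGroup (k : ℕ) : Subgroup (Equiv.Perm (List (Fin k))) :=
  Subgroup.closure {g | ∃ i j : Fin k, i < j ∧ g = hGen i j}

theorem hMove_length {k : ℕ} (i j : Fin k) (l : List (Fin k)) :
    (hMove i j l).length = l.length := by
  induction l with
  | nil => rfl
  | cons x w ih =>
    by_cases hxi : x = i
    · by_cases hij : j = i <;> simp [hMove, hxi, hij]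
    · by_cases hxj : x = j
      · by_cases hij : j = i <;> simp [hMove, hxi, hxj, hij]
      · simp [hMove, hxi, hxj, ih]

/-- Word length of a group element with respect to a set `S` of generators: the least `m`
such that `g` is a product of `m` elements of `S` (and `0` if no such `m` exists). -/
noncomputable def wordLength {G : Type*} [Group G] (S : Set G) (g : G) : ℕ :=
  sInf {m | ∃ l : List G, l.length = m ∧ (∀ s ∈ l, s ∈ S) ∧ l.prod = g}

/-- The section of a permutation `g` of the set of finite words at the letter `x`:
`g_x(w)` is the word obtained from `g(xw)` by deleting its first letter. -/
def wordSection {k : ℕ} (g : Equiv.Perm (List (Fin k))) (x : Fin k) :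
    List (Fin k) → List (Fin k) :=
  fun w => (g (x :: w)).tail

-- Auxiliary lemmas


theorem hGen_apply {k : ℕ} (i j : Fin k) (l : List (Fin k)) : hGen i j l = hMove i j l := rfl

theorem hGen_symm {k : ℕ} {i j : Fin k} (h : i ≠ j) : hGen i j = hGen j i := by
  have key : ∀ l, hMove i j l = hMove j i l := by
    intro l
    induction l with
    | nil => rfl
    | cons x w ih =>
      by_cases hxi : x = i <;> by_cases hxj : x = j <;> simp_all [hMove]
  exact Equiv.ext key

theorem hMove_cons_ne {k : ℕ} {i j x : Fin k} (hi : x ≠ i) (hj : x ≠ j) (w : List (Fin k)) :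
    hMove i j (x :: w) = x :: hMove i j w := by simp [hMove, hi, hj]

theorem hMove_replicate {k : ℕ} {i j a : Fin k} (hi : a ≠ i) (hj : a ≠ j) (n : ℕ)
    (l : List (Fin k)) :
    hMove i j (List.replicate n a ++ l) = List.replicate n a ++ hMove i j l := by
  induction n with
  | zero => simp
  | succ n ih => simp [List.replicate_succ, hMove_cons_ne hi hj, ih]

def hanoiSeq {k : ℕ} (i j aux : Fin k) : ℕ → List (Equiv.Perm (List (Fin k)))
  | 0 => []
  | n + 1 => hanoiSeq aux j i n ++ [hGen i j] ++ hanoiSeq i aux j n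

theorem hanoiSeq_spec {k : ℕ} : ∀ (n : ℕ) (i j aux : Fin k), i ≠ j → i ≠ aux → j ≠ aux →
    ∀ w : List (Fin k),
    (hanoiSeq i j aux n).prod (List.replicate n i ++ w) = List.replicate n j ++ w := by
  intro n
  induction n with
  | zero => intro i j aux _ _ _ w; simp [hanoiSeq]
  | succ n ih =>
    intro i j aux hij hia hja w
    have h1 : (hanoiSeq i aux j n).prod (List.replicate n i ++ (i :: w)) =
        List.replicate n aux ++ (i :: w) := ih i aux j hia hij (fun h => hja h.symm) (i :: w)
    have h2 : hGen i j (List.replicate n aux ++ (i :: w)) =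
        List.replicate n aux ++ (j :: w) := by
      rw [hGen_apply, hMove_replicate (fun h => hia h.symm) (fun h => hja h.symm)]
      simp [hMove]
    have h3 : (hanoiSeq aux j i n).prod (List.replicate n aux ++ (j :: w)) =
        List.replicate n j ++ (j :: w) :=
      ih aux j i (Ne.symm hja) (Ne.symm hia) hij.symm (j :: w)
    have hrep : List.replicate (n+1) i ++ w = List.replicate n i ++ (i :: w) := by
      simp [List.replicate_succ', List.append_assoc]
    have hrep' : List.replicate (n+1) j ++ w = List.replicate n j ++ (j :: w) := by
      simp [List.replicate_succ', List.append_assoc]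
    rw [hrep, hrep']
    simp only [hanoiSeq, List.prod_append, List.prod_cons, List.prod_nil, mul_one,
      Equiv.Perm.mul_apply, h1, h2, h3]


theorem hanoiSeq_mem {k : ℕ} : ∀ (n : ℕ) (i j aux : Fin k), i ≠ j → i ≠ aux → j ≠ aux →
    ∀ g ∈ hanoiSeq i j aux n, ∃ a b : Fin k, a ≠ b ∧ a ∈ ({i, j, aux} : Set (Fin k)) ∧
      b ∈ ({i, j, aux} : Set (Fin k)) ∧ g = hGen a b := by
  intro n
  induction n with
  | zero => intro i j aux _ _ _ g hg; simp [hanoiSeq] at hg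
  | succ n ih =>
    intro i j aux hij hia hja g hg
    simp only [hanoiSeq, List.mem_append, List.mem_singleton] at hg
    rcases hg with (hg | rfl) | hg
    · obtain ⟨a, b, hab, ha, hb, rfl⟩ := ih aux j i (Ne.symm hja) (Ne.symm hia) hij.symm _ hg
      refine ⟨a, b, hab, ?_, ?_, rfl⟩ <;> simp_all [Set.mem_insert_iff] <;> tauto
    · exact ⟨i, j, hij, by simp, by simp, rfl⟩
    · obtain ⟨a, b, hab, ha, hb, rfl⟩ := ih i aux j hia hij (Ne.symm hja) _ hg
      refine ⟨a, b, hab, ?_, ?_, rfl⟩ <;> simp_all [Set.mem_insert_iff] <;> tauto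

def ham {α : Type*} [DecidableEq α] : List α → List α → ℕ
  | [], _ => 0
  | _ :: _, [] => 0
  | a :: l, b :: m => (if a = b then 0 else 1) + ham l m

theorem ham_self {α : Type*} [DecidableEq α] : ∀ l : List α, ham l l = 0
  | [] => rfl
  | a :: l => by simp [ham, ham_self l]

theorem ham_triangle {α : Type*} [DecidableEq α] :
    ∀ (u v w : List α), u.length = v.length → ham u w ≤ ham u v + ham v w := by
  intro u
  induction u with
  | nil => intro v w _; simp [ham]
  | cons a u ih =>
    intro v w hl
    cases v with
    | nil => simp at hl
    | cons b v =>
      cases w with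
      | nil => simp [ham]
      | cons c w =>
        have h0 := ih v w (by simpa using hl)
        have h1 : (if a = c then (0:ℕ) else 1) ≤
            (if a = b then (0:ℕ) else 1) + (if b = c then (0:ℕ) else 1) := by
          split_ifs <;> simp_all
        simp only [ham]
        omega

theorem ham_hMove {k : ℕ} (i j : Fin k) : ∀ w, ham (hMove i j w) w ≤ 1 := by
  have hle : ∀ (a b : Fin k) (u : List (Fin k)), ham (a :: u) (b :: u) ≤ 1 := by
    intro a b u
    by_cases hab : a = b <;> simp [ham, hab, ham_self]
  intro w
  induction w with
  | nil => simp [hMove, ham]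
  | cons x w ih =>
    by_cases hxi : x = i
    · subst hxi
      rw [show hMove x j (x :: w) = j :: w from by simp [hMove]]
      exact hle j x w
    · by_cases hxj : x = j
      · subst hxj
        rw [show hMove i x (x :: w) = i :: w from by simp [hMove, hxi]]
        exact hle i x w
      · rw [hMove_cons_ne hxi hxj]
        simpa [ham] using ih

theorem ham_prod {k : ℕ} (l : List (Equiv.Perm (List (Fin k))))
    (hl : ∀ s ∈ l, ∃ i j : Fin k, s = hGen i j) (w : List (Fin k)) :
    ham (l.prod w) w ≤ l.length := by
  induction l with
  | nil => simp [ham_self]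
  | cons s l ih =>
    obtain ⟨i, j, rfl⟩ := hl s (by simp)
    calc ham ((hGen i j :: l).prod w) w = ham (hMove i j (l.prod w)) w := rfl
      _ ≤ ham (hMove i j (l.prod w)) (l.prod w) + ham (l.prod w) w :=
          ham_triangle _ _ _ (hMove_length i j _)
      _ ≤ 1 + l.length := add_le_add (ham_hMove i j _) (ih (fun s hs => hl s (by simp [hs])))
      _ = (hGen i j :: l).length := by simp [add_comm]

theorem ham_replicate {α : Type*} [DecidableEq α] {a b : α} (h : a ≠ b) :
    ∀ n, ham (List.replicate n a) (List.replicate n b) = n := by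
  intro n
  induction n with
  | zero => rfl
  | succ n ih => simp [List.replicate_succ, ham, h, ih, Nat.add_comm]

theorem prod_cons_fixed {k : ℕ} (x : Fin k) (l : List (Equiv.Perm (List (Fin k))))
    (hl : ∀ s ∈ l, ∃ i j : Fin k, i ≠ x ∧ j ≠ x ∧ s = hGen i j) (w : List (Fin k)) :
    l.prod (x :: w) = x :: l.prod w := by
  induction l with
  | nil => simp
  | cons s l ih =>
    obtain ⟨i, j, hi, hj, rfl⟩ := hl s (by simp)
    have := ih (fun s hs => hl s (by simp [hs]))
    calc (hGen i j :: l).prod (x :: w) = hMove i j (l.prod (x :: w)) := rfl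
      _ = hMove i j (x :: l.prod w) := by rw [this]
      _ = x :: hMove i j (l.prod w) := hMove_cons_ne (Ne.symm hi) (Ne.symm hj) _
      _ = x :: (hGen i j :: l).prod w := rfl


/-- For every `k ≥ 4` the Hanoi Towers group `H(k)` is not contracting:
for every `N` there exist `g ∈ H(k)` of word length at least `N` and a letter `x` such
that the section `g_x` (an element of `H(k)`) has word length at least that of `g`. -/
theorem hanoi_not_contracting (k : ℕ) (hk : 4 ≤ k) :
    ∀ N : ℕ, ∃ g ∈ HanoiGroup k,
      N ≤ wordLength {g : Equiv.Perm (List (Fin k)) | ∃ i j : Fin k, i < j ∧ g = hGen i j} g ∧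
      ∃ x : Fin k, ∃ h ∈ HanoiGroup k,
        (∀ w : List (Fin k), h w = wordSection g x w) ∧
        wordLength {g : Equiv.Perm (List (Fin k)) | ∃ i j : Fin k, i < j ∧ g = hGen i j} g ≤
          wordLength {g : Equiv.Perm (List (Fin k)) | ∃ i j : Fin k, i < j ∧ g = hGen i j} h := by
  intro N
  set S : Set (Equiv.Perm (List (Fin k))) :=
    {g : Equiv.Perm (List (Fin k)) | ∃ i j : Fin k, i < j ∧ g = hGen i j} with hSdef
  have h0k : (0 : ℕ) < k := by omega
  have h1k : (1 : ℕ) < k := by omega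
  have h2k : (2 : ℕ) < k := by omega
  have h3k : (3 : ℕ) < k := by omega
  set i0 : Fin k := ⟨0, h0k⟩ with hi0
  set i1 : Fin k := ⟨1, h1k⟩ with hi1
  set i2 : Fin k := ⟨2, h2k⟩ with hi2
  set i3 : Fin k := ⟨3, h3k⟩ with hi3
  have h01 : i0 ≠ i1 := by simp [hi0, hi1, Fin.ext_iff]
  have h02 : i0 ≠ i2 := by simp [hi0, hi2, Fin.ext_iff]
  have h12 : i1 ≠ i2 := by simp [hi1, hi2, Fin.ext_iff]
  set L := hanoiSeq i0 i1 i2 N with hL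
  -- every element of L is a generator with letters of value < 3
  have hmem : ∀ g ∈ L, ∃ a b : Fin k, a ≠ b ∧ a.val < 3 ∧ b.val < 3 ∧ g = hGen a b := by
    intro g hg
    obtain ⟨a, b, hab, ha, hb, rfl⟩ := hanoiSeq_mem N i0 i1 i2 h01 h02 h12 g hg
    refine ⟨a, b, hab, ?_, ?_, rfl⟩
    · rcases ha with h | h | h <;> subst h <;> simp [hi0, hi1, hi2]
    · rcases hb with h | h | h <;> subst h <;> simp [hi0, hi1, hi2]
  have hLS : ∀ g ∈ L, g ∈ S := by
    intro g hg
    obtain ⟨a, b, hab, _, _, rfl⟩ := hmem g hg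
    rcases lt_or_gt_of_ne hab with h | h
    · exact ⟨a, b, h, rfl⟩
    · exact ⟨b, a, h, hGen_symm hab⟩
  refine ⟨L.prod, ?_, ?_, i3, L.prod, ?_, ?_, le_refl _⟩
  · exact (HanoiGroup k).list_prod_mem fun g hg => Subgroup.subset_closure (hLS g hg)
  · -- word length lower bound
    unfold wordLength
    have hne : {m | ∃ l : List (Equiv.Perm (List (Fin k))),
        l.length = m ∧ (∀ s ∈ l, s ∈ S) ∧ l.prod = L.prod}.Nonempty :=
      ⟨L.length, L, rfl, hLS, rfl⟩
    apply le_csInf hne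
    rintro m ⟨l, rfl, hlS, hlprod⟩
    have hval : (L.prod) (List.replicate N i0) = List.replicate N i1 := by
      have := hanoiSeq_spec N i0 i1 i2 h01 h02 h12 []
      simpa using this
    have hham : ham (l.prod (List.replicate N i0)) (List.replicate N i0) = N := by
      rw [hlprod, hval, ham_replicate (Ne.symm h01) N]
    have hbound := ham_prod l (fun s hs => by
      obtain ⟨i, j, _, he⟩ := hlS s hs; exact ⟨i, j, he⟩) (List.replicate N i0)
    omega
  · exact (HanoiGroup k).list_prod_mem fun g hg => Subgroup.subset_closure (hLS g hg)
  · intro w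
    have hsec : L.prod (i3 :: w) = i3 :: L.prod w := by
      apply prod_cons_fixed
      intro s hs
      obtain ⟨a, b, hab, ha, hb, rfl⟩ := hmem s hs
      exact ⟨a, b, by simp [hi3, Fin.ext_iff]; omega, by simp [hi3, Fin.ext_iff]; omega, rfl⟩
    simp [wordSection, hsec]
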